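/- With UQ, UP, e₀, e₇ as in the context, one has the identity (α·γ⁻³·q⁻⁶·s⁻¹) · (UQ − q²β⁻¹·1₈) · (UP − qsγ⁻¹·1₈) · (UP − qsγα·1₈) · (UP − qsγβ·1₈) · e₀ = (1 − αq⁻¹)(1 − βq⁻¹)(1 − γ²α²q⁻¹)(1 − γ⁻²q⁻¹) · e₇ in F⁸, where 1₈ is the 8×8 identity matrix. (Here q^{13/2} = q⁶s and q^{3/2} = qs; this is the matrix identity underlying the ordinary projector e⁰_ord in Proposition 7.6(3) of Hsieh–Yamana: the (α⁻¹,γ)-stabilization φ‡ = e⁰_ord φ⁰_χ equals (1−αq⁻¹)(1−βq⁻¹)(1−γ²α²q⁻¹)(1−γ⁻²q⁻¹)·φ†.) -/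

import Mathlib

open Matrix

private lemma consEq {α : Type*} {n : ℕ} {x y : α} {u v : Fin n → α} (h : x = y) (h' : u = v) :
    Matrix.vecCons x u = Matrix.vecCons y v := by rw [h, h']

set_option maxHeartbeats 1000000 in
/-- The matrix identity underlying the ordinary projector `e⁰_ord` in
Proposition 7.6(3) of Hsieh–Yamana. -/
theorem hsieh_yamana_ordinary_projector_identity
    {F : Type*} [Field F] (q s α β γ : F)
    (hq : q ≠ 0) (hs0 : s ≠ 0) (hα : α ≠ 0) (hβ : β ≠ 0) (hγ : γ ≠ 0)
    (hsq : s ^ 2 = q) (habg : α * β * γ ^ 2 = 1)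
    (UQ UP : Matrix (Fin 8) (Fin 8) F)
    (hUQ : UQ = !![q^2*α, 0, 0, 0, 0, 0, 0, 0;
                   α*q*(q-1), q^2*β, 0, 0, 0, 0, 0, 0;
                   0, 0, q^2*α, 0, 0, 0, 0, 0;
                   0, q*(q-1)*(β+1), α*q*(q-1), q^2*β⁻¹, 0, 0, 0, 0;
                   (α+1)*(q-1), (q-1)^2, α*(q-1)^2, (q^2-q)*β⁻¹, q^2*α⁻¹, β*q*(q-1), 0, 0;
                   0, 0, α*q*(q-1), 0, 0, q^2*β, 0, 0;
                   α*q⁻¹*(q-1)^2, β*(q-1), (q-1)*(α*(q-1+q⁻¹)+1), 0, 0, (q-1)^2*(β+1), q^2*α⁻¹, (q^2-q)*β⁻¹;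
                   α*(q-1), 0, α*(q-1)^2, 0, 0, q*(q-1)*(β+1), 0, q^2*β⁻¹])
    (hUP : UP = !![q*s*γ⁻¹, 0, 0, 0, 0, 0, 0, 0;
                   0, q*s*γ⁻¹, 0, 0, 0, 0, 0, 0;
                   s*(q-1)*γ⁻¹, 0, α*γ*q*s, 0, 0, 0, 0, 0;
                   0, s*(q-1)*γ⁻¹, 0, α*γ*q*s, 0, 0, 0, 0;
                   (q-1)*γ⁻¹*s⁻¹, (q-1)^2*γ⁻¹*s⁻¹, 0, α*γ*s*(q-1), β*γ*q*s, 0, 0, 0;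
                   0, s*(q-1)*γ⁻¹, s*(q-1)*γ⁻¹*β⁻¹, 0, 0, β*γ*q*s, 0, 0;
                   (q-1)^2*γ⁻¹*q⁻¹*s⁻¹, (q^3-2*q^2+2*q-1)*γ⁻¹*q⁻¹*s⁻¹, α*γ*(q-1)*s⁻¹, α*γ*(q-1)^2*s⁻¹, β*γ*s*(q-1), 0, γ*q*s, 0;
                   (q-1)*γ⁻¹*s⁻¹, (q-1)^2*γ⁻¹*s⁻¹, 0, α*γ*s*(q-1), 0, s*(q-1)*γ⁻¹*α⁻¹, 0, γ*q*s]) :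
    (α * γ⁻¹^3 * q⁻¹^6 * s⁻¹) •
        (((UQ - (q^2*β⁻¹) • (1 : Matrix (Fin 8) (Fin 8) F)) *
          (UP - (q*s*γ⁻¹) • (1 : Matrix (Fin 8) (Fin 8) F)) *
          (UP - (q*s*γ*α) • (1 : Matrix (Fin 8) (Fin 8) F)) *
          (UP - (q*s*γ*β) • (1 : Matrix (Fin 8) (Fin 8) F))) *ᵥ
            ![1, 1, 1, 1, 1, 1, 1, 1]) =
      ((1 - α*q⁻¹) * (1 - β*q⁻¹) * (1 - γ^2*α^2*q⁻¹) * (1 - γ⁻¹^2*q⁻¹)) •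
        ![0, 0, 0, 0, 0, 0, 1, 0] := by
  have hβ' : β = (α*γ^2)⁻¹ := by
    field_simp
    linear_combination habg
  subst hβ' hsq
  have hA : α * α⁻¹ = 1 := mul_inv_cancel₀ hα
  have hG : γ * γ⁻¹ = 1 := mul_inv_cancel₀ hγ
  have hS : s * s⁻¹ = 1 := mul_inv_cancel₀ hs0
  have h1 : (UP - (s^2*s*γ*(α*γ^2)⁻¹) • (1 : Matrix (Fin 8) (Fin 8) F)) *ᵥ
      ![1, 1, 1, 1, 1, 1, 1, 1] = ![
      -α⁻¹*γ⁻¹*s^3 + γ⁻¹*s^3,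
      -α⁻¹*γ⁻¹*s^3 + γ⁻¹*s^3,
      -α⁻¹*γ⁻¹*s^3 + -γ⁻¹*s + γ⁻¹*s^3 + α*γ*s^3,
      -α⁻¹*γ⁻¹*s^3 + -γ⁻¹*s + γ⁻¹*s^3 + α*γ*s^3,
      -γ⁻¹*s + γ⁻¹*s^3 + -α*γ*s + α*γ*s^3,
      -γ⁻¹*s + γ⁻¹*s^3 + -α*γ*s + α*γ*s^3,
      -α⁻¹*γ⁻¹*s + -γ⁻¹*s + γ⁻¹*s^3 + γ*s^3 + -α*γ*s + α*γ*s^3,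
      -α⁻¹*γ⁻¹*s + -γ⁻¹*s + γ⁻¹*s^3 + γ*s^3 + -α*γ*s + α*γ*s^3] := by
    rw [hUP, Matrix.sub_mulVec, Matrix.smul_mulVec, Matrix.one_mulVec]
    simp only [Matrix.cons_mulVec, Matrix.cons_dotProduct, Matrix.dotProduct_of_isEmpty,
      Matrix.empty_mulVec, add_zero, Matrix.smul_cons, Matrix.smul_empty, smul_eq_mul,
      Matrix.cons_sub, Matrix.head_cons, Matrix.tail_cons, Matrix.empty_sub_empty, inv_inv]
    refine consEq ?_ (consEq ?_ (consEq ?_ (consEq ?_ (consEq ?_ (consEq ?_ (consEq ?_ (consEq ?_ rfl)))))))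
    · linear_combination (-α⁻¹*γ⁻¹*s^3) * hG
    · linear_combination (-α⁻¹*γ⁻¹*s^3) * hG
    · linear_combination (-α⁻¹*γ⁻¹*s^3) * hG
    · linear_combination (-α⁻¹*γ⁻¹*s^3) * hG
    · linear_combination (-γ⁻¹*s + γ⁻¹*s^3) * hS
    · linear_combination (-α*γ*s + α*γ*s^3) * hG
    · linear_combination (-α⁻¹*γ⁻¹*s) * hG + (-γ⁻¹*s + -γ⁻¹*s^2*s⁻¹ + γ⁻¹*s^3 + -γ⁻¹*s^3*s⁻¹^2 + γ⁻¹*s^4*s⁻¹ + γ⁻¹*s^5*s⁻¹^2 + -α*γ*s + α*γ*s^3) * hS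
    · linear_combination (-α⁻¹*γ⁻¹*s^3) * hG + (-γ⁻¹*s + γ⁻¹*s^3) * hS
  have h2 : (UP - (s^2*s*γ*α) • (1 : Matrix (Fin 8) (Fin 8) F)) *ᵥ
      ![
      -α⁻¹*γ⁻¹*s^3 + γ⁻¹*s^3,
      -α⁻¹*γ⁻¹*s^3 + γ⁻¹*s^3,
      -α⁻¹*γ⁻¹*s^3 + -γ⁻¹*s + γ⁻¹*s^3 + α*γ*s^3,
      -α⁻¹*γ⁻¹*s^3 + -γ⁻¹*s + γ⁻¹*s^3 + α*γ*s^3,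
      -γ⁻¹*s + γ⁻¹*s^3 + -α*γ*s + α*γ*s^3,
      -γ⁻¹*s + γ⁻¹*s^3 + -α*γ*s + α*γ*s^3,
      -α⁻¹*γ⁻¹*s + -γ⁻¹*s + γ⁻¹*s^3 + γ*s^3 + -α*γ*s + α*γ*s^3,
      -α⁻¹*γ⁻¹*s + -γ⁻¹*s + γ⁻¹*s^3 + γ*s^3 + -α*γ*s + α*γ*s^3] = ![
      -α⁻¹*γ⁻¹^2*s^6 + γ⁻¹^2*s^6 + s^6 + -α*s^6,
      -α⁻¹*γ⁻¹^2*s^6 + γ⁻¹^2*s^6 + s^6 + -α*s^6,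
      α⁻¹*γ⁻¹^2*s^4 + -α⁻¹*γ⁻¹^2*s^6 + -γ⁻¹^2*s^4 + γ⁻¹^2*s^6,
      α⁻¹*γ⁻¹^2*s^4 + -α⁻¹*γ⁻¹^2*s^6 + -γ⁻¹^2*s^4 + γ⁻¹^2*s^6,
      -γ⁻¹^2*s^4 + γ⁻¹^2*s^6 + α*s^2 + -α*s^4,
      -γ⁻¹^2*s^4 + γ⁻¹^2*s^6 + α*s^2 + -α*s^4,
      α⁻¹*γ⁻¹^2*s^2 + -α⁻¹*γ⁻¹^2*s^4 + -α⁻¹*s^4 + -γ⁻¹^2*s^4 + γ⁻¹^2*s^6 + s^2 + -s^4 + s^6 + γ^2*s^6 + α*s^2 + -α*s^4 + -α*γ^2*s^4,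
      α⁻¹*γ⁻¹^2*s^2 + -α⁻¹*γ⁻¹^2*s^4 + -α⁻¹*s^4 + -γ⁻¹^2*s^4 + γ⁻¹^2*s^6 + s^2 + -s^4 + s^6 + γ^2*s^6 + α*s^2 + -α*s^4 + -α*γ^2*s^4] := by
    rw [hUP, Matrix.sub_mulVec, Matrix.smul_mulVec, Matrix.one_mulVec]
    simp only [Matrix.cons_mulVec, Matrix.cons_dotProduct, Matrix.dotProduct_of_isEmpty,
      Matrix.empty_mulVec, add_zero, Matrix.smul_cons, Matrix.smul_empty, smul_eq_mul,
      Matrix.cons_sub, Matrix.head_cons, Matrix.tail_cons, Matrix.empty_sub_empty, inv_inv]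
    refine consEq ?_ (consEq ?_ (consEq ?_ (consEq ?_ (consEq ?_ (consEq ?_ (consEq ?_ (consEq ?_ rfl)))))))
    · linear_combination (γ*γ⁻¹*s^6) * hA + (s^6 + -α*s^6) * hG
    · linear_combination (γ*γ⁻¹*s^6) * hA + (s^6 + -α*s^6) * hG
    · ring
    · ring
    · linear_combination (γ*γ⁻¹*s^4 + -γ*γ⁻¹*s^6 + -γ^2*γ⁻¹^2*s^4 + γ^2*γ⁻¹^2*s^6) * hA + (-γ*γ⁻¹*s^4 + γ*γ⁻¹*s^6 + -α⁻¹*γ⁻¹^2*s^4 + α⁻¹*γ⁻¹^2*s^6 + α*s^2 + -α*s^4) * hG + (-γ⁻¹^2*s^4 + γ⁻¹^2*s^6 + α⁻¹*γ⁻¹^2*s^4 + -α⁻¹*γ⁻¹^2*s^6) * hS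
    · linear_combination (-α⁻¹*γ⁻¹^2*s^4 + α⁻¹*γ⁻¹^2*s^6 + α*s^2 + -α*s^4 + α*γ*γ⁻¹*s^2 + (-2)*α*γ*γ⁻¹*s^4 + α*γ*γ⁻¹*s^6 + -α^2*γ^2*s^4 + α^2*γ^2*s^6) * hG
    · linear_combination (γ*γ⁻¹*s^4 + γ*γ⁻¹*s^5*s⁻¹ + -γ*γ⁻¹*s^7*s⁻¹ + γ^2*γ⁻¹^2*s^2 + (-2)*γ^2*γ⁻¹^2*s^4 + γ^2*γ⁻¹^2*s^6) * hA + (s^2 + (-2)*s^4 + s^5*s⁻¹ + (2)*s^6 + -s^7*s⁻¹ + γ*γ⁻¹*s^2 + (-2)*γ*γ⁻¹*s^4 + γ*γ⁻¹*s^6 + -α⁻¹*s^4 + α⁻¹*γ⁻¹^2*s^2 + (-2)*α⁻¹*γ⁻¹^2*s^4 + α⁻¹*γ⁻¹^2*s^6 + α*s^3*s⁻¹ + α*s^4 + (-2)*α*s^5*s⁻¹ + -α*s^6 + α*s^7*s⁻¹) * hG + (s^4 + -s^6 + -γ⁻¹^2*s^4 + -γ⁻¹^2*s^5*s⁻¹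 + γ⁻¹^2*s^6 + -γ⁻¹^2*s^6*s⁻¹^2 + γ⁻¹^2*s^7*s⁻¹ + γ⁻¹^2*s^8*s⁻¹^2 + α⁻¹*γ⁻¹^2*s^4 + α⁻¹*γ⁻¹^2*s^5*s⁻¹ + -α⁻¹*γ⁻¹^2*s^6 + α⁻¹*γ⁻¹^2*s^6*s⁻¹^2 + -α⁻¹*γ⁻¹^2*s^7*s⁻¹ + -α⁻¹*γ⁻¹^2*s^8*s⁻¹^2 + α*s^2 + (-2)*α*s^4 + α*s^6 + -α^2*γ^2*s^4 + α^2*γ^2*s^6) * hS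
    · linear_combination (γ*γ⁻¹*s^2) * hA + (s^2 + -s^4 + s^6 + -α⁻¹*s^4 + α*s^2 + -α*s^4) * hG + (-γ⁻¹^2*s^4 + γ⁻¹^2*s^6 + α⁻¹*γ⁻¹^2*s^4 + -α⁻¹*γ⁻¹^2*s^6) * hS
  have h3 : (UP - (s^2*s*γ⁻¹) • (1 : Matrix (Fin 8) (Fin 8) F)) *ᵥ
      ![
      -α⁻¹*γ⁻¹^2*s^6 + γ⁻¹^2*s^6 + s^6 + -α*s^6,
      -α⁻¹*γ⁻¹^2*s^6 + γ⁻¹^2*s^6 + s^6 + -α*s^6,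
      α⁻¹*γ⁻¹^2*s^4 + -α⁻¹*γ⁻¹^2*s^6 + -γ⁻¹^2*s^4 + γ⁻¹^2*s^6,
      α⁻¹*γ⁻¹^2*s^4 + -α⁻¹*γ⁻¹^2*s^6 + -γ⁻¹^2*s^4 + γ⁻¹^2*s^6,
      -γ⁻¹^2*s^4 + γ⁻¹^2*s^6 + α*s^2 + -α*s^4,
      -γ⁻¹^2*s^4 + γ⁻¹^2*s^6 + α*s^2 + -α*s^4,
      α⁻¹*γ⁻¹^2*s^2 + -α⁻¹*γ⁻¹^2*s^4 + -α⁻¹*s^4 + -γ⁻¹^2*s^4 + γ⁻¹^2*s^6 + s^2 + -s^4 + s^6 + γ^2*s^6 + α*s^2 + -α*s^4 + -α*γ^2*s^4,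
      α⁻¹*γ⁻¹^2*s^2 + -α⁻¹*γ⁻¹^2*s^4 + -α⁻¹*s^4 + -γ⁻¹^2*s^4 + γ⁻¹^2*s^6 + s^2 + -s^4 + s^6 + γ^2*s^6 + α*s^2 + -α*s^4 + -α*γ^2*s^4] = ![
      0,
      0,
      0,
      0,
      0,
      0,
      α⁻¹*γ⁻¹*s^5 + -α⁻¹*γ*s^7 + -γ⁻¹*s^3 + γ*s^5 + -γ*s^7 + γ^3*s^9 + α*γ*s^5 + -α*γ^3*s^7,
      α⁻¹*γ⁻¹*s^5 + -α⁻¹*γ*s^7 + -γ⁻¹*s^3 + γ*s^5 + -γ*s^7 + γ^3*s^9 + α*γ*s^5 + -α*γ^3*s^7] := by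
    rw [hUP, Matrix.sub_mulVec, Matrix.smul_mulVec, Matrix.one_mulVec]
    simp only [Matrix.cons_mulVec, Matrix.cons_dotProduct, Matrix.dotProduct_of_isEmpty,
      Matrix.empty_mulVec, add_zero, Matrix.smul_cons, Matrix.smul_empty, smul_eq_mul,
      Matrix.cons_sub, Matrix.head_cons, Matrix.tail_cons, Matrix.empty_sub_empty, inv_inv]
    refine consEq ?_ (consEq ?_ (consEq ?_ (consEq ?_ (consEq ?_ (consEq ?_ (consEq ?_ (consEq ?_ rfl)))))))
    · ring
    · ring
    · linear_combination (γ*γ⁻¹^2*s^7 + -γ*γ⁻¹^2*s^9) * hA + (γ⁻¹*s^7 + -γ⁻¹*s^9 + -α*γ⁻¹*s^7 + α*γ⁻¹*s^9) * hG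
    · linear_combination (γ*γ⁻¹^2*s^7 + -γ*γ⁻¹^2*s^9) * hA + (γ⁻¹*s^7 + -γ⁻¹*s^9 + -α*γ⁻¹*s^7 + α*γ⁻¹*s^9) * hG
    · linear_combination (γ*γ⁻¹^2*s^7 + -γ*γ⁻¹^2*s^9) * hA + (γ⁻¹*s^7 + -γ⁻¹*s^9 + -α⁻¹*γ⁻¹^3*s^7 + α⁻¹*γ⁻¹^3*s^9 + α*γ⁻¹*s^5 + (-2)*α*γ⁻¹*s^7 + α*γ⁻¹*s^9) * hG + (-γ⁻¹*s^7 + γ⁻¹*s^9 + -γ⁻¹^3*s^7 + γ⁻¹^3*s^9 + α⁻¹*γ⁻¹^3*s^7 + -α⁻¹*γ⁻¹^3*s^9 + α*γ⁻¹*s^7 + -α*γ⁻¹*s^9) * hS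
    · linear_combination (γ*γ⁻¹^2*s^5 + -γ*γ⁻¹^2*s^7 + -γ^2*γ⁻¹^3*s^5 + (2)*γ^2*γ⁻¹^3*s^7 + -γ^2*γ⁻¹^3*s^9) * hA + (γ⁻¹*s^7 + -γ⁻¹*s^9 + -γ*γ⁻¹^2*s^5 + (2)*γ*γ⁻¹^2*s^7 + -γ*γ⁻¹^2*s^9 + -α⁻¹*γ⁻¹^3*s^7 + α⁻¹*γ⁻¹^3*s^9 + α*γ⁻¹*s^5 + (-2)*α*γ⁻¹*s^7 + α*γ⁻¹*s^9 + α*γ*γ⁻¹^2*s^5 + (-2)*α*γ*γ⁻¹^2*s^7 + α*γ*γ⁻¹^2*s^9) * hG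
    · linear_combination (-γ*γ⁻¹^2*s^3 + (2)*γ*γ⁻¹^2*s^5 + -γ*γ⁻¹^2*s^6*s⁻¹ + -γ*γ⁻¹^2*s^7 + (2)*γ*γ⁻¹^2*s^8*s⁻¹ + -γ*γ⁻¹^2*s^10*s⁻¹) * hA + (-γ⁻¹*s^3 + (2)*γ⁻¹*s^5 + -γ⁻¹*s^6*s⁻¹ + (-2)*γ⁻¹*s^7 + (2)*γ⁻¹*s^8*s⁻¹ + γ⁻¹*s^9 + -γ⁻¹*s^10*s⁻¹ + -γ*s^9 + α⁻¹*γ⁻¹*s^5 + -α⁻¹*γ⁻¹*s^7 + α⁻¹*γ⁻¹^3*s^5 + (-2)*α⁻¹*γ⁻¹^3*s^7 + α⁻¹*γ⁻¹^3*s^9 + α*γ⁻¹*s^6*s⁻¹ + (-2)*α*γ⁻¹*s^8*s⁻¹ + α*γ⁻¹*s^10*s⁻¹ + α*γ*s^7) * hG + (-γ⁻¹*s^5 + γ⁻¹*s^7 + -γ⁻¹*s^8*s⁻¹ + -γ⁻¹*s^9*s⁻¹^2 + γ⁻¹*s^10*s⁻¹ + γ⁻¹*s^11*s⁻¹^2 +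 -γ⁻¹^3*s^7 + -γ⁻¹^3*s^8*s⁻¹ + γ⁻¹^3*s^9 + -γ⁻¹^3*s^9*s⁻¹^2 + γ⁻¹^3*s^10*s⁻¹ + γ⁻¹^3*s^11*s⁻¹^2 + α⁻¹*γ⁻¹^3*s^7 + α⁻¹*γ⁻¹^3*s^8*s⁻¹ + -α⁻¹*γ⁻¹^3*s^9 + α⁻¹*γ⁻¹^3*s^9*s⁻¹^2 + -α⁻¹*γ⁻¹^3*s^10*s⁻¹ + -α⁻¹*γ⁻¹^3*s^11*s⁻¹^2 + α*γ⁻¹*s^5 + -α*γ⁻¹*s^7 + α*γ⁻¹*s^8*s⁻¹ + α*γ⁻¹*s^9*s⁻¹^2 + -α*γ⁻¹*s^10*s⁻¹ + -α*γ⁻¹*s^11*s⁻¹^2) * hS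
    · linear_combination (-γ⁻¹*s^3 + (2)*γ⁻¹*s^5 + -γ⁻¹*s^7 + -γ*γ⁻¹^2*s^5 + (2)*γ*γ⁻¹^2*s^7 + -γ*γ⁻¹^2*s^9) * hA + (-γ⁻¹*s^5 + γ⁻¹*s^7 + -γ*s^9 + α⁻¹*γ⁻¹*s^5 + -α⁻¹*γ⁻¹*s^7 + α*γ⁻¹*s^5 + (-2)*α*γ⁻¹*s^7 + α*γ⁻¹*s^9 + α*γ*s^7) * hG + (-γ⁻¹*s^7 + γ⁻¹*s^9 + -γ⁻¹^3*s^7 + γ⁻¹^3*s^9 + α⁻¹*γ⁻¹^3*s^7 + -α⁻¹*γ⁻¹^3*s^9 + α*γ⁻¹*s^7 + -α*γ⁻¹*s^9) * hS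
  have h4 : (UQ - ((s^2)^2*((α*γ^2)⁻¹)⁻¹) • (1 : Matrix (Fin 8) (Fin 8) F)) *ᵥ
      ![
      0,
      0,
      0,
      0,
      0,
      0,
      α⁻¹*γ⁻¹*s^5 + -α⁻¹*γ*s^7 + -γ⁻¹*s^3 + γ*s^5 + -γ*s^7 + γ^3*s^9 + α*γ*s^5 + -α*γ^3*s^7,
      α⁻¹*γ⁻¹*s^5 + -α⁻¹*γ*s^7 + -γ⁻¹*s^3 + γ*s^5 + -γ*s^7 + γ^3*s^9 + α*γ*s^5 + -α*γ^3*s^7] = ![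
      0,
      0,
      0,
      0,
      0,
      0,
      α⁻¹^2*γ⁻¹*s^9 + -α⁻¹^2*γ*s^11 + -α⁻¹*γ⁻¹*s^7 + α⁻¹*γ*s^9 + -α⁻¹*γ*s^11 + α⁻¹*γ^3*s^13 + -γ*s^7 + γ*s^9 + γ^3*s^9 + -γ^3*s^11 + α*γ*s^5 + -α*γ^3*s^7 + α*γ^3*s^9 + -α*γ^5*s^11 + -α^2*γ^3*s^7 + α^2*γ^5*s^9,
      0] := by
    rw [hUQ, Matrix.sub_mulVec, Matrix.smul_mulVec, Matrix.one_mulVec]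
    simp only [Matrix.cons_mulVec, Matrix.cons_dotProduct, Matrix.dotProduct_of_isEmpty,
      Matrix.empty_mulVec, add_zero, Matrix.smul_cons, Matrix.smul_empty, smul_eq_mul,
      Matrix.cons_sub, Matrix.head_cons, Matrix.tail_cons, Matrix.empty_sub_empty, inv_inv]
    refine consEq ?_ (consEq ?_ (consEq ?_ (consEq ?_ (consEq ?_ (consEq ?_ (consEq ?_ (consEq ?_ rfl)))))))
    · ring
    · ring
    · ring
    · ring
    · ring
    · ring
    · linear_combination (γ*s^9 + -γ^2*γ⁻¹*s^7 + γ^3*s^9 + -γ^3*s^11) * hA + (-γ*s^7 + α*γ*s^5) * hG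
    · ring
  rw [Matrix.mul_assoc, Matrix.mul_assoc, ← Matrix.mulVec_mulVec, ← Matrix.mulVec_mulVec,
    ← Matrix.mulVec_mulVec, h1, h2, h3, h4]
  simp only [Matrix.smul_cons, Matrix.smul_empty, smul_eq_mul]
  refine consEq ?_ (consEq ?_ (consEq ?_ (consEq ?_ (consEq ?_ (consEq ?_ (consEq ?_ (consEq ?_ rfl)))))))
  · ring
  · ring
  · ring
  · ring
  · ring
  · ring
  · linear_combination (-γ⁻¹^2*s⁻¹^4 + γ⁻¹^4*s⁻¹^6 + -γ⁻¹^4*s^7*s⁻¹^13 + γ*γ⁻¹^3*s^9*s⁻¹^13 + -γ*γ⁻¹^3*s^11*s⁻¹^13 + γ^3*γ⁻¹^3*s^13*s⁻¹^13 + α⁻¹*γ⁻¹^4*s^9*s⁻¹^13 + -α⁻¹*γ*γ⁻¹^3*s^11*s⁻¹^13 + -α*γ^2*γ⁻¹^2*s⁻¹^4 + α*γ^2*γ⁻¹^4*s⁻¹^6 + α^2*γ^2*γ⁻¹^2*s⁻¹^6 + -α^2*γ^2*γ⁻¹^4*s⁻¹^8) * hA + (s^13*s⁻¹^13 + γ⁻¹^2*s^9*s⁻¹^13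 + -γ⁻¹^2*s^11*s⁻¹^13 + γ*γ⁻¹*s^13*s⁻¹^13 + γ^2*γ⁻¹^2*s^13*s⁻¹^13 + -α⁻¹*γ⁻¹^2*s^11*s⁻¹^13 + -α*s⁻¹^4 + α*s^9*s⁻¹^13 + -α*s^11*s⁻¹^13 + α*γ⁻¹^2*s⁻¹^6 + -α*γ⁻¹^2*s^7*s⁻¹^13 + α*γ⁻¹^2*s^9*s⁻¹^13 + -α*γ*γ⁻¹*s⁻¹^4 + α*γ*γ⁻¹*s^9*s⁻¹^13 + -α*γ*γ⁻¹*s^11*s⁻¹^13 + α*γ*γ⁻¹^3*s⁻¹^6 + α*γ^2*γ⁻¹^2*s^9*s⁻¹^13 + -α*γ^2*γ⁻¹^2*s^11*s⁻¹^13 + -α^2*s⁻¹^4 + α^2*s⁻¹^6 + -α^2*s^7*s⁻¹^13 + α^2*s^9*s⁻¹^13 + -α^2*γ⁻¹^2*s⁻¹^8 + α^2*γ⁻¹^2*s^5*s⁻¹^13 + -α^2*γ*γ⁻¹*s⁻¹^4 + α^2*γ*γ⁻¹*s⁻¹^6 + -α^2*γ*γ⁻¹*s^7*s⁻¹^13 +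 α^2*γ*γ⁻¹*s^9*s⁻¹^13 + -α^2*γ*γ⁻¹^3*s⁻¹^8 + -α^2*γ^2*s^11*s⁻¹^13 + -α^2*γ^2*γ⁻¹^2*s^7*s⁻¹^13 + α^2*γ^2*γ⁻¹^2*s^9*s⁻¹^13 + -α^2*γ^3*γ⁻¹*s^11*s⁻¹^13 + -α^2*γ^4*γ⁻¹^2*s^11*s⁻¹^13 + α^3*s⁻¹^6 + -α^3*s^7*s⁻¹^13 + α^3*γ*γ⁻¹*s⁻¹^6 + -α^3*γ*γ⁻¹*s^7*s⁻¹^13 + α^3*γ^2*s^9*s⁻¹^13 + -α^3*γ^2*γ⁻¹^2*s^7*s⁻¹^13 + α^3*γ^3*γ⁻¹*s^9*s⁻¹^13 + α^3*γ^4*γ⁻¹^2*s^9*s⁻¹^13) * hG + (1 + s*s⁻¹ + s^2*s⁻¹^2 + s^3*s⁻¹^3 + s^4*s⁻¹^4 + s^5*s⁻¹^5 + s^6*s⁻¹^6 + s^7*s⁻¹^7 + s^8*s⁻¹^8 + s^9*s⁻¹^9 + s^10*s⁻¹^10 + s^11*s⁻¹^11 + s^12*s⁻¹^12 + -γ⁻¹^2*s⁻¹^2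 + γ⁻¹^2*s⁻¹^4 + -γ⁻¹^2*s*s⁻¹^3 + γ⁻¹^2*s*s⁻¹^5 + -γ⁻¹^2*s^2*s⁻¹^4 + γ⁻¹^2*s^2*s⁻¹^6 + -γ⁻¹^2*s^3*s⁻¹^5 + γ⁻¹^2*s^3*s⁻¹^7 + -γ⁻¹^2*s^4*s⁻¹^6 + γ⁻¹^2*s^4*s⁻¹^8 + -γ⁻¹^2*s^5*s⁻¹^7 + γ⁻¹^2*s^5*s⁻¹^9 + -γ⁻¹^2*s^6*s⁻¹^8 + γ⁻¹^2*s^6*s⁻¹^10 + -γ⁻¹^2*s^7*s⁻¹^9 + γ⁻¹^2*s^7*s⁻¹^11 + -γ⁻¹^2*s^8*s⁻¹^10 + γ⁻¹^2*s^8*s⁻¹^12 + -γ⁻¹^2*s^9*s⁻¹^11 + -γ⁻¹^2*s^10*s⁻¹^12 + -γ⁻¹^4*s⁻¹^6 + -γ⁻¹^4*s*s⁻¹^7 + -γ⁻¹^4*s^2*s⁻¹^8 + -γ⁻¹^4*s^3*s⁻¹^9 + -γ⁻¹^4*s^4*s⁻¹^10 + -γ⁻¹^4*s^5*s⁻¹^11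 + -γ⁻¹^4*s^6*s⁻¹^12 + -α⁻¹*γ⁻¹^2*s⁻¹^2 + -α⁻¹*γ⁻¹^2*s*s⁻¹^3 + -α⁻¹*γ⁻¹^2*s^2*s⁻¹^4 + -α⁻¹*γ⁻¹^2*s^3*s⁻¹^5 + -α⁻¹*γ⁻¹^2*s^4*s⁻¹^6 + -α⁻¹*γ⁻¹^2*s^5*s⁻¹^7 + -α⁻¹*γ⁻¹^2*s^6*s⁻¹^8 + -α⁻¹*γ⁻¹^2*s^7*s⁻¹^9 + -α⁻¹*γ⁻¹^2*s^8*s⁻¹^10 + -α⁻¹*γ⁻¹^2*s^9*s⁻¹^11 + -α⁻¹*γ⁻¹^2*s^10*s⁻¹^12 + α⁻¹*γ⁻¹^4*s⁻¹^4 + α⁻¹*γ⁻¹^4*s*s⁻¹^5 + α⁻¹*γ⁻¹^4*s^2*s⁻¹^6 + α⁻¹*γ⁻¹^4*s^3*s⁻¹^7 + α⁻¹*γ⁻¹^4*s^4*s⁻¹^8 + α⁻¹*γ⁻¹^4*s^5*s⁻¹^9 + α⁻¹*γ⁻¹^4*s^6*s⁻¹^10 + α⁻¹*γ⁻¹^4*s^7*s⁻¹^11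 + α⁻¹*γ⁻¹^4*s^8*s⁻¹^12 + -α*s⁻¹^2 + α*s⁻¹^4 + -α*s*s⁻¹^3 + α*s*s⁻¹^5 + -α*s^2*s⁻¹^4 + α*s^2*s⁻¹^6 + -α*s^3*s⁻¹^5 + α*s^3*s⁻¹^7 + -α*s^4*s⁻¹^6 + α*s^4*s⁻¹^8 + -α*s^5*s⁻¹^7 + α*s^5*s⁻¹^9 + -α*s^6*s⁻¹^8 + α*s^6*s⁻¹^10 + -α*s^7*s⁻¹^9 + α*s^7*s⁻¹^11 + -α*s^8*s⁻¹^10 + α*s^8*s⁻¹^12 + -α*s^9*s⁻¹^11 + -α*s^10*s⁻¹^12 + α*γ⁻¹^2*s⁻¹^4 + -α*γ⁻¹^2*s⁻¹^6 + α*γ⁻¹^2*s*s⁻¹^5 + -α*γ⁻¹^2*s*s⁻¹^7 + α*γ⁻¹^2*s^2*s⁻¹^6 + -α*γ⁻¹^2*s^2*s⁻¹^8 + α*γ⁻¹^2*s^3*s⁻¹^7 + -α*γ⁻¹^2*s^3*s⁻¹^9 + α*γ⁻¹^2*s^4*s⁻¹^8 + -α*γ⁻¹^2*s^4*s⁻¹^10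 + α*γ⁻¹^2*s^5*s⁻¹^9 + -α*γ⁻¹^2*s^5*s⁻¹^11 + α*γ⁻¹^2*s^6*s⁻¹^10 + -α*γ⁻¹^2*s^6*s⁻¹^12 + α*γ⁻¹^2*s^7*s⁻¹^11 + α*γ⁻¹^2*s^8*s⁻¹^12 + α^2*s⁻¹^4 + -α^2*s⁻¹^6 + α^2*s*s⁻¹^5 + -α^2*s*s⁻¹^7 + α^2*s^2*s⁻¹^6 + -α^2*s^2*s⁻¹^8 + α^2*s^3*s⁻¹^7 + -α^2*s^3*s⁻¹^9 + α^2*s^4*s⁻¹^8 + -α^2*s^4*s⁻¹^10 + α^2*s^5*s⁻¹^9 + -α^2*s^5*s⁻¹^11 + α^2*s^6*s⁻¹^10 + -α^2*s^6*s⁻¹^12 + α^2*s^7*s⁻¹^11 + α^2*s^8*s⁻¹^12 + α^2*γ⁻¹^2*s⁻¹^8 + α^2*γ⁻¹^2*s*s⁻¹^9 + α^2*γ⁻¹^2*s^2*s⁻¹^10 + α^2*γ⁻¹^2*s^3*s⁻¹^11 + α^2*γ⁻¹^2*s^4*s⁻¹^12 + -α^2*γ^2*s⁻¹^2 + -α^2*γ^2*s*s⁻¹^3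 + -α^2*γ^2*s^2*s⁻¹^4 + -α^2*γ^2*s^3*s⁻¹^5 + -α^2*γ^2*s^4*s⁻¹^6 + -α^2*γ^2*s^5*s⁻¹^7 + -α^2*γ^2*s^6*s⁻¹^8 + -α^2*γ^2*s^7*s⁻¹^9 + -α^2*γ^2*s^8*s⁻¹^10 + -α^2*γ^2*s^9*s⁻¹^11 + -α^2*γ^2*s^10*s⁻¹^12 + -α^3*s⁻¹^6 + -α^3*s*s⁻¹^7 + -α^3*s^2*s⁻¹^8 + -α^3*s^3*s⁻¹^9 + -α^3*s^4*s⁻¹^10 + -α^3*s^5*s⁻¹^11 + -α^3*s^6*s⁻¹^12 + α^3*γ^2*s⁻¹^4 + α^3*γ^2*s*s⁻¹^5 + α^3*γ^2*s^2*s⁻¹^6 + α^3*γ^2*s^3*s⁻¹^7 + α^3*γ^2*s^4*s⁻¹^8 + α^3*γ^2*s^5*s⁻¹^9 + α^3*γ^2*s^6*s⁻¹^10 + α^3*γ^2*s^7*s⁻¹^11 + α^3*γ^2*s^8*s⁻¹^12) * hS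
  · ring
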